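/- (Spatial building blocks with disjoint supports.) Let Λ_θ = {e_1, e_2, e_3} and let Λ_v be a finite subset of S² ∩ Q³ disjoint from Λ_θ, where each k ∈ Λ_v ∪ Λ_θ carries an orthonormal basis (k, k̄, k̄̄) of R³, and let N_Λ be a positive integer such that N_Λ k, N_Λ k̄, N_Λ k̄̄ ∈ Z³ for every k ∈ Λ_v ∪ Λ_θ. Let λ ≥ 1 and let φ: R → R be a smooth 1-periodic function whose support within one period is contained in an interval of length λ^{−1}. Then, provided λ is sufficiently large (depending only on Λ_v ∪ Λ_θ and N_Λ), there exist shifts x^k ∈ R³ for k ∈ Λ_v ∪ Λ_θ such that the T³-periodic functions W^θ_{(k)}(x) = φ(N_Λ k̄·(x − x^k)) φ(N_Λ k̄̄·(x − x^k)) for k ∈ Λ_θ, and W^v_{(k)}(x) = φ(N_Λ k·(x − x^k)) φ(N_Λ k̄̄·(x − x^k)) for k ∈ Λ_v, have pairwise disjoint supports; that is, W^θ_{(k)} W^θ_{(k')} ≡ 0 for k ≠ k' in Λ_θ, W^v_{(k)} W^v_{(k')} ≡ 0 for k ≠ k' in Λ_v, and W^v_{(k)} W^θ_{(k')} ≡ 0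 for all k ∈ Λ_v, k' ∈ Λ_θ. -/

import Mathlib

open MeasureTheory Set Real Filter
open scoped ENNReal NNReal BigOperators

noncomputable section

abbrev V3 := Fin 3 → ℝ

/-- Fundamental domain of the torus `T³ = ℝ³/ℤ³`. -/
def cube3 : Set V3 := Set.univ.pi fun _ => Set.Ico (0:ℝ) 1

/-- The measure on the torus, realized as Lebesgue measure on the fundamental domain. -/
def muT : Measure V3 := volume.restrict cube3

/-- `ℤ³`-periodicity of a function on `ℝ³`. -/
def Per {α : Type*} (f : V3 → α) : Prop :=
  ∀ (x : V3) (k : Fin 3 → ℤ), f (x + (fun i => (k i : ℝ))) = f x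

/-- The partial derivative `∂ᵢ g` at `x`. -/
def pd (g : V3 → ℝ) (i : Fin 3) (x : V3) : ℝ := fderiv ℝ g x (Pi.single i 1)

/-- Divergence of a vector field. -/
def divg (u : V3 → V3) (x : V3) : ℝ := ∑ i, pd (fun y => u y i) i x

/-- Euclidean norm on `ℝ³`. -/
def nE (x : V3) : ℝ := Real.sqrt (∑ i, x i ^ 2)

/-- The building block `x ↦ φ(N a·(x-x₀)) φ(N b·(x-x₀))`. -/
def Wfn (φ : ℝ → ℝ) (N : ℕ) (a b x0 x : V3) : ℝ :=
  φ (∑ i, (N:ℝ) * a i * (x i - x0 i)) * φ (∑ i, (N:ℝ) * b i * (x i - x0 i))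


-- ===================== auxiliary machinery =====================
open scoped Classical

/-- dot product on `ℝ³`. -/
def dt (x y : V3) : ℝ := ∑ i, x i * y i

/-- cross product on `ℝ³`. -/
def c3 (x y : V3) : V3 :=
  ![x 1 * y 2 - x 2 * y 1, x 2 * y 0 - x 0 * y 2, x 0 * y 1 - x 1 * y 0]

lemma dt_comm (x y : V3) : dt x y = dt y x := by
  simp [dt, Fin.sum_univ_three]; ring

lemma lagrange (A B : V3) :
    dt (c3 A B) (c3 A B) = dt A A * dt B B - (dt A B)^2 := by
  simp [dt, c3, Fin.sum_univ_three]; ring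

lemma triple_left (A B : V3) : dt A (c3 A B) = 0 := by
  simp [dt, c3, Fin.sum_univ_three]; ring

lemma triple_mid (A B : V3) : dt B (c3 A B) = 0 := by
  simp [dt, c3, Fin.sum_univ_three]; ring

lemma parallel_aux (A n n' : V3) :
    dt A (c3 n (c3 n n')) = dt n n' * dt A n - dt n n * dt A n' := by
  simp [dt, c3, Fin.sum_univ_three]; ring

lemma c3_zero_right (n : V3) : c3 n 0 = 0 := by
  funext i; fin_cases i <;> simp [c3]

lemma dt_zero_right (A : V3) : dt A (0 : V3) = 0 := by simp [dt]

lemma dot_cross_cross (P A B y : V3) :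
    dt P A * (dt B B * dt A y - dt A B * dt B y)
      + dt P B * (dt A A * dt B y - dt A B * dt A y)
    = (dt A A * dt B B - (dt A B)^2) * dt P y - dt (c3 A B) P * dt (c3 A B) y := by
  simp [dt, c3, Fin.sum_univ_three]; ring

lemma span_dt (M : ℝ) (hM : 0 < M) (A B P : V3)
    (hA : dt A A = M) (hB : dt B B = M) (hAB : dt A B = 0)
    (hPn : dt (c3 A B) P = 0) (y : V3) :
    dt P A * dt A y + dt P B * dt B y = M * dt P y := by
  have h := dot_cross_cross P A B y
  rw [hA, hB, hAB, hPn] at h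
  nlinarith [h]

lemma zint_c3 (x y : V3) (hx : ∀ i, ∃ m:ℤ, x i = m) (hy : ∀ i, ∃ m:ℤ, y i = m) :
    ∀ i, ∃ m:ℤ, c3 x y i = m := by
  obtain ⟨a0, ha0⟩ := hx 0
  obtain ⟨a1, ha1⟩ := hx 1
  obtain ⟨a2, ha2⟩ := hx 2
  obtain ⟨b0, hb0⟩ := hy 0
  obtain ⟨b1, hb1⟩ := hy 1
  obtain ⟨b2, hb2⟩ := hy 2
  intro i
  fin_cases i
  · refine ⟨a1*b2 - a2*b1, ?_⟩
    show x 1 * y 2 - x 2 * y 1 = _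
    rw [ha1, ha2, hb1, hb2]; push_cast; ring
  · refine ⟨a2*b0 - a0*b2, ?_⟩
    show x 2 * y 0 - x 0 * y 2 = _
    rw [ha0, ha2, hb0, hb2]; push_cast; ring
  · refine ⟨a0*b1 - a1*b0, ?_⟩
    show x 0 * y 1 - x 1 * y 0 = _
    rw [ha0, ha1, hb0, hb1]; push_cast; ring

lemma zint_dt (x y : V3) (hx : ∀ i, ∃ m:ℤ, x i = m) (hy : ∀ i, ∃ m:ℤ, y i = m) :
    ∃ m:ℤ, dt x y = m := by
  obtain ⟨a0, ha0⟩ := hx 0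
  obtain ⟨a1, ha1⟩ := hx 1
  obtain ⟨a2, ha2⟩ := hx 2
  obtain ⟨b0, hb0⟩ := hy 0
  obtain ⟨b1, hb1⟩ := hy 1
  obtain ⟨b2, hb2⟩ := hy 2
  exact ⟨a0*b0 + a1*b1 + a2*b2, by
    rw [dt, Fin.sum_univ_three, ha0, ha1, ha2, hb0, hb1, hb2]; push_cast; ring⟩

lemma P_props (M : ℝ) (hM : 0 < M) (A B A' B' Q : V3)
    (hQ : Q = if c3 (c3 A B) (c3 A' B') = 0 then A else c3 (c3 A B) (c3 A' B'))
    (hA : dt A A = M) (hB : dt B B = M) (hAB : dt A B = 0)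
    (hA' : dt A' A' = M) (hB' : dt B' B' = M) (hAB' : dt A' B' = 0) :
    dt (c3 A B) Q = 0 ∧ dt (c3 A' B') Q = 0 ∧ Q ≠ 0 := by
  by_cases hcc : c3 (c3 A B) (c3 A' B') = 0
  · rw [hQ, if_pos hcc]
    refine ⟨by rw [dt_comm]; exact triple_left A B, ?_, ?_⟩
    · have hpar := parallel_aux A (c3 A B) (c3 A' B')
      rw [hcc, c3_zero_right, dt_zero_right] at hpar
      have h1 : dt A (c3 A B) = 0 := triple_left A B
      have h2 : dt (c3 A B) (c3 A B) = M * M := by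
        rw [lagrange, hA, hB, hAB]; ring
      rw [h1, h2, mul_zero] at hpar
      have h3 : dt A (c3 A' B') = 0 := by
        have hMM : M * M ≠ 0 := by positivity
        have hz : M * M * dt A (c3 A' B') = 0 := by linarith
        rcases mul_eq_zero.mp hz with h | h
        · exact absurd h hMM
        · exact h
      rw [dt_comm]; exact h3
    · intro h0
      rw [h0, dt_zero_right] at hA
      linarith
  · rw [hQ, if_neg hcc]
    exact ⟨triple_left _ _, triple_mid _ _, hcc⟩

/-- the fixed transcendental direction. -/
def uL : V3 := ![1, liouvilleNumber 3, (liouvilleNumber 3)^2]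

lemma dt_uL_ne_zero (P : V3) (hP : ∀ i, ∃ m : ℤ, P i = m) (hne : P ≠ 0) :
    dt P uL ≠ 0 := by
  obtain ⟨m0, h0⟩ := hP 0
  obtain ⟨m1, h1⟩ := hP 1
  obtain ⟨m2, h2⟩ := hP 2
  intro hdot
  have htr : Transcendental ℤ (liouvilleNumber 3) :=
    transcendental_liouvilleNumber (by norm_num)
  set L := liouvilleNumber 3
  have hsum : (m0 : ℝ) + m1 * L + m2 * L^2 = 0 := by
    have : dt P uL = P 0 * 1 + P 1 * L + P 2 * L^2 := by
      simp [dt, uL, Fin.sum_univ_three]; rfl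
    rw [this, h0, h1, h2] at hdot; linarith
  have hnz : ¬ (m0 = 0 ∧ m1 = 0 ∧ m2 = 0) := by
    intro ⟨e0, e1, e2⟩
    apply hne
    funext i
    fin_cases i <;> simp_all
  apply htr
  refine ⟨Polynomial.C m0 + Polynomial.C m1 * Polynomial.X
    + Polynomial.C m2 * Polynomial.X^2, ?_, ?_⟩
  · intro hpoly
    apply hnz
    have c0 := congrArg (Polynomial.coeff · 0) hpoly
    have c1 := congrArg (Polynomial.coeff · 1) hpoly
    have c2 := congrArg (Polynomial.coeff · 2) hpoly
    simp only [Polynomial.coeff_add, Polynomial.coeff_C_mul, Polynomial.coeff_C,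
      Polynomial.coeff_X_pow, Polynomial.coeff_X_one, Polynomial.coeff_X,
      Polynomial.coeff_zero] at c0 c1 c2
    norm_num at c0 c1 c2
    exact ⟨c0, c1, c2⟩
  · simp [Polynomial.aeval_add, Polynomial.aeval_C, Polynomial.aeval_X]
    linear_combination hsum

lemma prod_bound (p r e : ℝ) (h0 : 0 ≤ r) (h1 : r ≤ e) :
    p * r ≤ |p| * e ∧ -(|p| * e) ≤ p * r := by
  constructor
  · calc p * r ≤ |p| * r := mul_le_mul_of_nonneg_right (le_abs_self p) h0
      _ ≤ |p| * e := mul_le_mul_of_nonneg_left h1 (abs_nonneg p)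
  · calc -(|p| * e) ≤ -(|p| * r) := neg_le_neg (mul_le_mul_of_nonneg_left h1 (abs_nonneg p))
      _ = (-|p|) * r := by ring
      _ ≤ p * r := mul_le_mul_of_nonneg_right (neg_abs_le p) h0

set_option maxHeartbeats 1000000 in
lemma pair_key (M : ℝ) (hM : 0 < M)
    (A B A' B' P u : V3)
    (hA : dt A A = M) (hB : dt B B = M) (hAB : dt A B = 0)
    (hA' : dt A' A' = M) (hB' : dt B' B' = M) (hAB' : dt A' B' = 0)
    (hPn : dt (c3 A B) P = 0) (hPn' : dt (c3 A' B') P = 0)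
    (mA mB mA' mB' : ℤ)
    (hmA : dt P A = mA) (hmB : dt P B = mB) (hmA' : dt P A' = mA') (hmB' : dt P B' = mB')
    (ε c t t' : ℝ) (x : V3)
    (h1 : ∃ n:ℤ, c + n ≤ dt A x - t * dt A u ∧ dt A x - t * dt A u ≤ c + n + ε)
    (h2 : ∃ n:ℤ, c + n ≤ dt B x - t * dt B u ∧ dt B x - t * dt B u ≤ c + n + ε)
    (h3 : ∃ n:ℤ, c + n ≤ dt A' x - t' * dt A' u ∧ dt A' x - t' * dt A' u ≤ c + n + ε)
    (h4 : ∃ n:ℤ, c + n ≤ dt B' x - t' * dt B' u ∧ dt B' x - t' * dt B' u ≤ c + n + ε) :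
    ∃ n : ℤ, |dt P u * t - (dt P u * t'
        - ((dt P A + dt P B) - (dt P A' + dt P B'))/M * c) - n/M|
      ≤ ((|dt P A| + |dt P B| + |dt P A'| + |dt P B'|)/M) * ε := by
  obtain ⟨n1, hn1⟩ := h1
  obtain ⟨n2, hn2⟩ := h2
  obtain ⟨n3, hn3⟩ := h3
  obtain ⟨n4, hn4⟩ := h4
  obtain ⟨r1, hAx, hr1a, hr1b⟩ : ∃ r:ℝ, dt A x = t * dt A u + c + n1 + r ∧ 0 ≤ r ∧ r ≤ ε :=
    ⟨dt A x - t*dt A u - c - n1, by ring, by linarith [hn1.1], by linarith [hn1.2]⟩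
  obtain ⟨r2, hBx, hr2a, hr2b⟩ : ∃ r:ℝ, dt B x = t * dt B u + c + n2 + r ∧ 0 ≤ r ∧ r ≤ ε :=
    ⟨dt B x - t*dt B u - c - n2, by ring, by linarith [hn2.1], by linarith [hn2.2]⟩
  obtain ⟨r3, hA'x, hr3a, hr3b⟩ : ∃ r:ℝ, dt A' x = t' * dt A' u + c + n3 + r ∧ 0 ≤ r ∧ r ≤ ε :=
    ⟨dt A' x - t'*dt A' u - c - n3, by ring, by linarith [hn3.1], by linarith [hn3.2]⟩
  obtain ⟨r4, hB'x, hr4a, hr4b⟩ : ∃ r:ℝ, dt B' x = t' * dt B' u + c + n4 + r ∧ 0 ≤ r ∧ r ≤ ε :=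
    ⟨dt B' x - t'*dt B' u - c - n4, by ring, by linarith [hn4.1], by linarith [hn4.2]⟩
  have s1 := span_dt M hM A B P hA hB hAB hPn x
  have su := span_dt M hM A B P hA hB hAB hPn u
  have s3 := span_dt M hM A' B' P hA' hB' hAB' hPn' x
  have su' := span_dt M hM A' B' P hA' hB' hAB' hPn' u
  rw [hAx, hBx] at s1
  rw [hA'x, hB'x] at s3
  refine ⟨mA'*n3 + mB'*n4 - mA*n1 - mB*n2, ?_⟩
  have hncast : ((mA'*n3 + mB'*n4 - mA*n1 - mB*n2 : ℤ):ℝ)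
      = (mA':ℝ)*n3 + (mB':ℝ)*n4 - (mA:ℝ)*n1 - (mB:ℝ)*n2 := by push_cast; ring
  have hEM : (dt P u * t - (dt P u * t'
        - ((dt P A + dt P B) - (dt P A' + dt P B'))/M * c)
        - ((mA'*n3 + mB'*n4 - mA*n1 - mB*n2 : ℤ):ℝ)/M) * M
      = dt P A' * r3 + dt P B' * r4 - dt P A * r1 - dt P B * r2 := by
    rw [hncast, ← hmA, ← hmB, ← hmA', ← hmB']
    have hdiv : ∀ q : ℝ, q / M * M = q := fun q => div_mul_cancel₀ q hM.ne'
    have hd1 := hdiv ((dt P A + dt P B) - (dt P A' + dt P B'))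
    have hd2 := hdiv ((dt P A')*n3 + (dt P B')*n4 - (dt P A)*n1 - (dt P B)*n2)
    linear_combination s1 - s3 - t*su + t'*su' + c*hd1 - hd2
  have hEb : |dt P u * t - (dt P u * t'
        - ((dt P A + dt P B) - (dt P A' + dt P B'))/M * c)
        - ((mA'*n3 + mB'*n4 - mA*n1 - mB*n2 : ℤ):ℝ)/M| * M
      ≤ (|dt P A| + |dt P B| + |dt P A'| + |dt P B'|) * ε := by
    have e1 := prod_bound (dt P A) r1 ε hr1a hr1b
    have e2 := prod_bound (dt P B) r2 ε hr2a hr2b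
    have e3 := prod_bound (dt P A') r3 ε hr3a hr3b
    have e4 := prod_bound (dt P B') r4 ε hr4a hr4b
    have habs : |(dt P u * t - (dt P u * t'
        - ((dt P A + dt P B) - (dt P A' + dt P B'))/M * c)
        - ((mA'*n3 + mB'*n4 - mA*n1 - mB*n2 : ℤ):ℝ)/M) * M|
        ≤ (|dt P A| + |dt P B| + |dt P A'| + |dt P B'|) * ε := by
      rw [hEM, abs_le]
      constructor <;> linarith [e1.1, e1.2, e2.1, e2.2, e3.1, e3.2, e4.1, e4.2]
    rwa [abs_mul, abs_of_pos hM] at habs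
  rw [div_mul_eq_mul_div (|dt P A| + |dt P B| + |dt P A'| + |dt P B'|) M ε, le_div_iff₀ hM]
  exact hEb

lemma bad_vol (M : ℝ) (hM : 0 < M) (a θ δ : ℝ) (ha : a ≠ 0) (hδ : 0 ≤ δ) :
    volume ({t : ℝ | ∃ n : ℤ, |a*t - θ - n/M| ≤ δ} ∩ Set.Icc 0 1)
      ≤ ENNReal.ofReal ((2*M*|a| + 2*M*δ + 2) * (2 * δ / |a|)) := by
  have hA : (0:ℝ) < |a| := abs_pos.mpr ha
  set lo : ℤ := ⌈M*(-|a| - θ - δ)⌉ with hlo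
  set K : ℤ := ⌈M*(2*|a| + 2*δ)⌉ with hK
  have hsub : {t : ℝ | ∃ n : ℤ, |a*t - θ - n/M| ≤ δ} ∩ Set.Icc 0 1 ⊆
      ⋃ n ∈ Finset.Icc lo (lo+K),
        Set.Icc ((θ + n/M)/a - δ/|a|) ((θ + n/M)/a + δ/|a|) := by
    rintro t ⟨⟨n, hn⟩, ht0, ht1⟩
    have hat : -|a| ≤ a*t ∧ a*t ≤ |a| := by
      constructor
      · nlinarith [neg_abs_le a, abs_nonneg a]
      · nlinarith [le_abs_self a, abs_nonneg a]
    have habs := abs_le.mp hn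
    have hnlo : lo ≤ n := by
      have h1 : M*(-|a| - θ - δ) ≤ (n:ℝ) := by
        have : -|a| - θ - δ ≤ (n:ℝ)/M := by
          have := habs.1
          nlinarith
        calc M*(-|a| - θ - δ) ≤ M * ((n:ℝ)/M) := by nlinarith
          _ = (n:ℝ) := by field_simp
      exact Int.ceil_le.mpr h1
    have hnhi : n ≤ lo + K := by
      have h2 : (n:ℝ) ≤ M*(|a| - θ + δ) := by
        have : (n:ℝ)/M ≤ |a| - θ + δ := by
          have := habs.2
          nlinarith
        calc (n:ℝ) = M * ((n:ℝ)/M) := by field_simp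
          _ ≤ M*(|a| - θ + δ) := by nlinarith
      have h3 : ((lo:ℝ) + (K:ℝ)) ≥ (n:ℝ) := by
        have e1 : M*(-|a| - θ - δ) ≤ (lo:ℝ) := Int.le_ceil _
        have e2 : M*(2*|a| + 2*δ) ≤ (K:ℝ) := Int.le_ceil _
        nlinarith
      exact_mod_cast h3
    refine Set.mem_iUnion.mpr ⟨n, Set.mem_iUnion.mpr ⟨Finset.mem_Icc.mpr ⟨hnlo, hnhi⟩, ?_⟩⟩
    have key : |t - (θ + n/M)/a| ≤ δ/|a| := by
      have heq : |a| * |t - (θ + n/M)/a| = |a*t - θ - n/M| := by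
        rw [← abs_mul]
        congr 1
        field_simp
        ring
      calc |t - (θ + n/M)/a| = |a*t - θ - n/M| / |a| := by
            rw [← heq]; field_simp
        _ ≤ δ/|a| := by gcongr
    have hk2 := abs_le.mp key
    exact ⟨by linarith [hk2.1], by linarith [hk2.2]⟩
  calc volume ({t : ℝ | ∃ n : ℤ, |a*t - θ - n/M| ≤ δ} ∩ Set.Icc 0 1)
      ≤ ∑ n ∈ Finset.Icc lo (lo+K),
          volume (Set.Icc ((θ + n/M)/a - δ/|a|) ((θ + n/M)/a + δ/|a|)) :=
        (measure_mono hsub).trans (measure_biUnion_finset_le _ _)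
    _ = ∑ n ∈ Finset.Icc lo (lo+K), ENNReal.ofReal (2 * δ / |a|) := by
        refine Finset.sum_congr rfl fun n _ => ?_
        rw [Real.volume_Icc]
        congr 1
        ring
    _ = (Finset.Icc lo (lo+K)).card * ENNReal.ofReal (2 * δ / |a|) := by
        rw [Finset.sum_const, nsmul_eq_mul]
    _ ≤ ENNReal.ofReal (2*M*|a| + 2*M*δ + 2) * ENNReal.ofReal (2 * δ / |a|) := by
        gcongr
        have hK0 : (0:ℤ) ≤ K := by
          have : (0:ℝ) ≤ M*(2*|a| + 2*δ) := by positivity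
          exact_mod_cast (Int.ceil_nonneg this)
        have hcard : ((Finset.Icc lo (lo+K)).card : ℝ) ≤ (K:ℝ) + 1 := by
          rw [Int.card_Icc]
          have e : ((lo + K + 1 - lo).toNat : ℤ) = K + 1 := by
            rw [Int.toNat_of_nonneg (by omega)]; ring
          have e2 : (((lo + K + 1 - lo).toNat : ℕ) : ℝ) = (K:ℝ) + 1 := by
            exact_mod_cast congrArg (Int.cast : ℤ → ℝ) e
          rw [e2]
        have hKb : (K:ℝ) ≤ M*(2*|a| + 2*δ) + 1 := le_of_lt (Int.ceil_lt_add_one _)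
        calc ((Finset.Icc lo (lo+K)).card : ℝ≥0∞)
            = ENNReal.ofReal ((Finset.Icc lo (lo+K)).card : ℝ) := by
              rw [ENNReal.ofReal_natCast]
          _ ≤ ENNReal.ofReal (2*M*|a| + 2*M*δ + 2) := by
              apply ENNReal.ofReal_le_ofReal
              nlinarith
    _ = ENNReal.ofReal ((2*M*|a| + 2*M*δ + 2) * (2 * δ / |a|)) := by
        rw [← ENNReal.ofReal_mul (by positivity)]

lemma exists_avoid {ι : Type*} (I : Finset ι) (M : ℝ) (hM : 0 < M)
    (a θ δ : ι → ℝ) (ha : ∀ i ∈ I, a i ≠ 0) (hδ : ∀ i ∈ I, 0 ≤ δ i)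
    (hsum : ∑ i ∈ I, (2*M*|a i| + 2*M*(δ i) + 2) * (2 * δ i / |a i|) < 1) :
    ∃ t : ℝ, ∀ i ∈ I, ∀ n : ℤ, ¬ |a i * t - θ i - n/M| ≤ δ i := by
  by_contra hcon
  push_neg at hcon
  have hcover : Set.Icc (0:ℝ) 1 ⊆
      ⋃ i ∈ I, ({t : ℝ | ∃ n : ℤ, |a i * t - θ i - n/M| ≤ δ i} ∩ Set.Icc 0 1) := by
    intro t ht
    obtain ⟨i, hi, n, hn⟩ := hcon t
    exact Set.mem_biUnion hi ⟨⟨n, hn⟩, ht⟩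
  have h1 : (1:ℝ≥0∞) ≤ ∑ i ∈ I, ENNReal.ofReal
      ((2*M*|a i| + 2*M*(δ i) + 2) * (2 * δ i / |a i|)) := by
    calc (1:ℝ≥0∞) = volume (Set.Icc (0:ℝ) 1) := by
          rw [Real.volume_Icc]; norm_num
      _ ≤ ∑ i ∈ I, volume ({t : ℝ | ∃ n : ℤ, |a i * t - θ i - n/M| ≤ δ i} ∩ Set.Icc 0 1) :=
          (measure_mono hcover).trans (measure_biUnion_finset_le _ _)
      _ ≤ _ := Finset.sum_le_sum fun i hi => bad_vol M hM _ _ _ (ha i hi) (hδ i hi)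
  rw [← ENNReal.ofReal_sum_of_nonneg
    (fun i hi => by have h1 := hδ i hi; have h2 := abs_nonneg (a i); positivity)] at h1
  have := ENNReal.one_le_ofReal.mp h1
  linarith

def DDf (P : V3 → V3 → V3) (Af Bf : V3 → V3) (M : ℝ) (p : V3 × V3) : ℝ :=
  (|dt (P p.1 p.2) (Af p.1)| + |dt (P p.1 p.2) (Bf p.1)|
    + |dt (P p.1 p.2) (Af p.2)| + |dt (P p.1 p.2) (Bf p.2)|)/M

def gf (P : V3 → V3 → V3) (Af Bf : V3 → V3) (M : ℝ) (p : V3 × V3) : ℝ :=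
  (2*M*|dt (P p.1 p.2) uL| + 2*M*(DDf P Af Bf M p) + 2)
    * (2 * DDf P Af Bf M p / |dt (P p.1 p.2) uL|)

set_option maxHeartbeats 1000000 in
lemma master (M : ℝ) (hM : 0 < M) (F : Finset V3)
    (Af Bf : V3 → V3) (P : V3 → V3 → V3)
    (hPa : ∀ k ∈ F, ∀ k' ∈ F, dt (P k k') uL ≠ 0) :
    ∃ lam0 : ℝ, 1 ≤ lam0 ∧ ∀ lam : ℝ, lam0 ≤ lam → ∀ c : ℝ, ∃ t : V3 → ℝ,
      ∀ k ∈ F, ∀ k' ∈ F, k ≠ k' → ∀ n : ℤ,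
        ¬ |dt (P k k') uL * t k - (dt (P k k') uL * t k'
            - ((dt (P k k') (Af k) + dt (P k k') (Bf k))
              - (dt (P k k') (Af k') + dt (P k k') (Bf k')))/M * c) - (n:ℝ)/M|
          ≤ DDf P Af Bf M (k, k') * lam⁻¹ := by
  have hD0 : ∀ p : V3 × V3, 0 ≤ DDf P Af Bf M p := by
    intro p
    apply div_nonneg _ hM.le
    positivity
  have hg0 : ∀ p : V3 × V3, 0 ≤ gf P Af Bf M p := by
    intro p
    apply mul_nonneg
    · have := hD0 p
      have := abs_nonneg (dt (P p.1 p.2) uL)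
      nlinarith
    · apply div_nonneg _ (abs_nonneg _)
      have := hD0 p
      linarith
  refine ⟨1 + ∑ p ∈ F ×ˢ F, gf P Af Bf M p, ?_, ?_⟩
  · have : 0 ≤ ∑ p ∈ F ×ˢ F, gf P Af Bf M p := Finset.sum_nonneg fun p _ => hg0 p
    linarith
  intro lam hlam c
  have hlam1 : (1:ℝ) ≤ lam := by
    have : 0 ≤ ∑ p ∈ F ×ˢ F, gf P Af Bf M p := Finset.sum_nonneg fun p _ => hg0 p
    linarith
  have hlampos : (0:ℝ) < lam := by linarith
  have hinv0 : (0:ℝ) ≤ lam⁻¹ := by positivity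
  have hinv1 : lam⁻¹ ≤ 1 := by
    rw [inv_le_one_iff₀]; right; exact hlam1
  have choice : ∀ S : Finset V3, S ⊆ F → ∃ t : V3 → ℝ,
      ∀ k ∈ S, ∀ k' ∈ S, k ≠ k' → ∀ n : ℤ,
        ¬ |dt (P k k') uL * t k - (dt (P k k') uL * t k'
            - ((dt (P k k') (Af k) + dt (P k k') (Bf k))
              - (dt (P k k') (Af k') + dt (P k k') (Bf k')))/M * c) - (n:ℝ)/M|
          ≤ DDf P Af Bf M (k, k') * lam⁻¹ := by
    intro S
    induction S using Finset.induction_on with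
    | empty => exact fun _ => ⟨fun _ => 0, by simp⟩
    | @insert k S hkS ih =>
      intro hsub
      have hkF : k ∈ F := hsub (Finset.mem_insert_self k S)
      have hSF : S ⊆ F := fun z hz => hsub (Finset.mem_insert_of_mem hz)
      obtain ⟨t, ht⟩ := ih hSF
      set I : Finset (V3 × V3) := ({k} ×ˢ S) ∪ (S ×ˢ {k}) with hI
      have hIsub : I ⊆ F ×ˢ F := by
        intro p hp
        rw [hI, Finset.mem_union] at hp
        rcases hp with hp | hp <;> rw [Finset.mem_product] at hp <;>
          simp only [Finset.mem_singleton] at hp <;> rw [Finset.mem_product]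
        · exact ⟨hp.1 ▸ hkF, hSF hp.2⟩
        · exact ⟨hSF hp.1, hp.2 ▸ hkF⟩
      have hmem : ∀ p ∈ I, p.1 ∈ F ∧ p.2 ∈ F := by
        intro p hp
        have := hIsub hp
        rw [Finset.mem_product] at this
        exact this
      obtain ⟨s, hs⟩ := exists_avoid I M hM
        (fun p => if p.1 = k then dt (P k p.2) uL else -(dt (P p.1 p.2) uL))
        (fun p => if p.1 = k then dt (P k p.2) uL * t p.2
            - ((dt (P k p.2) (Af k) + dt (P k p.2) (Bf k))
              - (dt (P k p.2) (Af p.2) + dt (P k p.2) (Bf p.2)))/M * c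
          else -(dt (P p.1 p.2) uL * t p.1)
            - ((dt (P p.1 p.2) (Af p.1) + dt (P p.1 p.2) (Bf p.1))
              - (dt (P p.1 p.2) (Af p.2) + dt (P p.1 p.2) (Bf p.2)))/M * c)
        (fun p => DDf P Af Bf M p * lam⁻¹)
        (by
          intro p hp
          obtain ⟨h1, h2⟩ := hmem p hp
          by_cases hpk : p.1 = k
          · simpa [hpk] using hPa k hkF p.2 h2
          · simp only [if_neg hpk, ne_eq, neg_eq_zero]
            exact hPa p.1 h1 p.2 h2)
        (fun p _ => mul_nonneg (hD0 p) hinv0)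
        (by
          calc ∑ p ∈ I, (2*M*|if p.1 = k then dt (P k p.2) uL else -(dt (P p.1 p.2) uL)|
                + 2*M*(DDf P Af Bf M p * lam⁻¹) + 2)
                * (2 * (DDf P Af Bf M p * lam⁻¹)
                  / |if p.1 = k then dt (P k p.2) uL else -(dt (P p.1 p.2) uL)|)
              ≤ ∑ p ∈ I, lam⁻¹ * gf P Af Bf M p := by
                apply Finset.sum_le_sum
                intro p hp
                have habs : |if p.1 = k then dt (P k p.2) uL else -(dt (P p.1 p.2) uL)|
                    = |dt (P p.1 p.2) uL| := by
                  by_cases hpk : p.1 = k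
                  · rw [if_pos hpk, hpk]
                  · rw [if_neg hpk, abs_neg]
                rw [habs]
                have e1 : (2*M*|dt (P p.1 p.2) uL| + 2*M*(DDf P Af Bf M p * lam⁻¹) + 2)
                    * (2 * (DDf P Af Bf M p * lam⁻¹) / |dt (P p.1 p.2) uL|)
                    = lam⁻¹ * ((2*M*|dt (P p.1 p.2) uL| + 2*M*(DDf P Af Bf M p * lam⁻¹) + 2)
                      * (2 * DDf P Af Bf M p / |dt (P p.1 p.2) uL|)) := by
                  ring
                rw [e1]
                apply mul_le_mul_of_nonneg_left _ hinv0
                unfold gf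
                apply mul_le_mul_of_nonneg_right
                · have h3 : 2*M*(DDf P Af Bf M p * lam⁻¹) ≤ 2*M*(DDf P Af Bf M p) := by
                    apply mul_le_mul_of_nonneg_left _ (by linarith)
                    exact mul_le_of_le_one_right (hD0 p) hinv1
                  linarith
                · apply div_nonneg _ (abs_nonneg _)
                  have := hD0 p
                  linarith
            _ = lam⁻¹ * ∑ p ∈ I, gf P Af Bf M p := by rw [Finset.mul_sum]
            _ ≤ lam⁻¹ * ∑ p ∈ F ×ˢ F, gf P Af Bf M p := by
                apply mul_le_mul_of_nonneg_left _ hinv0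
                exact Finset.sum_le_sum_of_subset_of_nonneg hIsub fun p _ _ => hg0 p
            _ < 1 := by
                have hlt : ∑ p ∈ F ×ˢ F, gf P Af Bf M p < lam := by linarith
                have h0 : 0 ≤ ∑ p ∈ F ×ˢ F, gf P Af Bf M p :=
                  Finset.sum_nonneg fun p _ => hg0 p
                calc lam⁻¹ * ∑ p ∈ F ×ˢ F, gf P Af Bf M p
                    < lam⁻¹ * lam := by
                      apply mul_lt_mul_of_pos_left hlt (by positivity)
                  _ = 1 := inv_mul_cancel₀ (ne_of_gt hlampos)
                )
      refine ⟨Function.update t k s, ?_⟩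
      intro k1 hk1 k2 hk2 hne n
      rcases Finset.mem_insert.mp hk1 with h1 | h1 <;>
        rcases Finset.mem_insert.mp hk2 with h2 | h2
      · exact absurd (h1.trans h2.symm) hne
      · subst h1
        have hpI : (k1, k2) ∈ I := by
          rw [hI, Finset.mem_union]
          left
          rw [Finset.mem_product]
          exact ⟨Finset.mem_singleton_self k1, h2⟩
        have := hs (k1, k2) hpI n
        rw [Function.update_self]
        rw [Function.update_of_ne (by intro hx; exact hkS (hx ▸ h2)) _ _]
        simpa using this
      · subst h2
        have hpI : (k1, k2) ∈ I := by
          rw [hI, Finset.mem_union]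
          right
          rw [Finset.mem_product]
          exact ⟨h1, Finset.mem_singleton_self k2⟩
        have hk1k : k1 ≠ k2 := by intro hx; exact hkS (hx ▸ h1)
        have := hs (k1, k2) hpI n
        rw [Function.update_self]
        rw [Function.update_of_ne hk1k _ _]
        simp only [if_neg hk1k] at this
        intro hcon
        apply this
        calc |(-(dt (P k1 k2) uL)) * s - (-(dt (P k1 k2) uL * t k1)
              - ((dt (P k1 k2) (Af k1) + dt (P k1 k2) (Bf k1))
                - (dt (P k1 k2) (Af k2) + dt (P k1 k2) (Bf k2)))/M * c) - (n:ℝ)/M|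
            = |dt (P k1 k2) uL * t k1 - (dt (P k1 k2) uL * s
              - ((dt (P k1 k2) (Af k1) + dt (P k1 k2) (Bf k1))
                - (dt (P k1 k2) (Af k2) + dt (P k1 k2) (Bf k2)))/M * c) - (n:ℝ)/M| := by
              congr 1; ring
          _ ≤ _ := hcon
      · have hne1 : k1 ≠ k := by intro hx; exact hkS (hx ▸ h1)
        have hne2 : k2 ≠ k := by intro hx; exact hkS (hx ▸ h2)
        rw [Function.update_of_ne hne1 _ _, Function.update_of_ne hne2 _ _]
        exact ht k1 h1 k2 h2 hne n
  obtain ⟨t, ht⟩ := choice F (le_refl F)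
  exact ⟨t, ht⟩

/-- first spatial direction of the block for `k`. -/
def afD (Λθ : Set V3) (kb : V3 → V3) (k : V3) : V3 := if k ∈ Λθ then kb k else k

def AfD (Λθ : Set V3) (kb : V3 → V3) (NΛ : ℕ) (k : V3) : V3 :=
  fun i => (NΛ:ℝ) * afD Λθ kb k i

def BfD (kbb : V3 → V3) (NΛ : ℕ) (k : V3) : V3 := fun i => (NΛ:ℝ) * kbb k i

def PD (Λθ : Set V3) (kb kbb : V3 → V3) (NΛ : ℕ) (k k' : V3) : V3 :=
  if c3 (c3 (AfD Λθ kb NΛ k) (BfD kbb NΛ k)) (c3 (AfD Λθ kb NΛ k') (BfD kbb NΛ k')) = 0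
  then AfD Λθ kb NΛ k
  else c3 (c3 (AfD Λθ kb NΛ k) (BfD kbb NΛ k)) (c3 (AfD Λθ kb NΛ k') (BfD kbb NΛ k'))

/-- spatial building blocks supported in thin disjoint cuboids.
For `λ` large (depending only on the direction sets and `N_Λ`) there exist shifts making
all the cuboid flows `W^θ_{(k)}`, `W^v_{(k)}` have pairwise disjoint supports. -/
theorem stmt13 (Λθ Λv : Set V3)
    (hΛθ : ∀ k : V3, k ∈ Λθ ↔ (k = Pi.single 0 1 ∨ k = Pi.single 1 1 ∨ k = Pi.single 2 1))
    (hΛvfin : Λv.Finite) (hdisj : Disjoint Λv Λθ)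
    (kb kbb : V3 → V3)
    (hbasis : ∀ k : V3, k ∈ Λv ∨ k ∈ Λθ →
      (∑ i, (k i)^2 = 1) ∧ (∑ i, (kb k i)^2 = 1) ∧ (∑ i, (kbb k i)^2 = 1) ∧
      (∑ i, k i * kb k i = 0) ∧ (∑ i, k i * kbb k i = 0) ∧ (∑ i, kb k i * kbb k i = 0))
    (hrat : ∀ k : V3, k ∈ Λv ∨ k ∈ Λθ → ∀ i, ∃ r : ℚ, k i = (r : ℝ))
    (NΛ : ℕ) (hN : 0 < NΛ)
    (hNint : ∀ k : V3, k ∈ Λv ∨ k ∈ Λθ →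
      (∀ i, ∃ m : ℤ, (NΛ:ℝ) * k i = (m:ℝ)) ∧ (∀ i, ∃ m : ℤ, (NΛ:ℝ) * kb k i = (m:ℝ)) ∧
      (∀ i, ∃ m : ℤ, (NΛ:ℝ) * kbb k i = (m:ℝ))) :
    ∃ lam0 : ℝ, ∀ lam : ℝ, lam0 ≤ lam → 1 ≤ lam →
      ∀ φ : ℝ → ℝ, ContDiff ℝ (⊤ : ℕ∞) φ → Function.Periodic φ 1 →
        (∃ c : ℝ, ∀ z : ℝ, φ z ≠ 0 → ∃ n : ℤ, c + (n:ℝ) ≤ z ∧ z ≤ c + (n:ℝ) + lam⁻¹) →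
        ∃ xs : V3 → V3,
          (∀ k ∈ Λθ, ∀ k' ∈ Λθ, k ≠ k' → ∀ x : V3,
            Wfn φ NΛ (kb k) (kbb k) (xs k) x * Wfn φ NΛ (kb k') (kbb k') (xs k') x = 0) ∧
          (∀ k ∈ Λv, ∀ k' ∈ Λv, k ≠ k' → ∀ x : V3,
            Wfn φ NΛ k (kbb k) (xs k) x * Wfn φ NΛ k' (kbb k') (xs k') x = 0) ∧
          (∀ k ∈ Λv, ∀ k' ∈ Λθ, ∀ x : V3,
            Wfn φ NΛ k (kbb k) (xs k) x * Wfn φ NΛ (kb k') (kbb k') (xs k') x = 0) := by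
  classical
  have hNR : (0:ℝ) < (NΛ:ℝ) := by exact_mod_cast hN
  have hM : (0:ℝ) < (NΛ:ℝ)^2 := by positivity
  have hstr : ∀ z, (z ∈ Λv ∨ z ∈ Λθ) →
      dt (AfD Λθ kb NΛ z) (AfD Λθ kb NΛ z) = (NΛ:ℝ)^2 ∧
      dt (BfD kbb NΛ z) (BfD kbb NΛ z) = (NΛ:ℝ)^2 ∧
      dt (AfD Λθ kb NΛ z) (BfD kbb NΛ z) = 0 ∧
      (∀ i, ∃ m:ℤ, AfD Λθ kb NΛ z i = m) ∧
      (∀ i, ∃ m:ℤ, BfD kbb NΛ z i = m) := by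
    intro z hz
    obtain ⟨h1, h2, h3, h4, h5, h6⟩ := hbasis z hz
    obtain ⟨z1, z2, z3⟩ := hNint z hz
    rw [Fin.sum_univ_three] at h1 h2 h3 h4 h5 h6
    by_cases hzθ : z ∈ Λθ
    · have haf : afD Λθ kb z = kb z := by unfold afD; rw [if_pos hzθ]
      refine ⟨?_, ?_, ?_, fun i => ?_, fun i => ?_⟩
      · simp only [AfD, BfD, haf, dt, Fin.sum_univ_three]
        linear_combination ((NΛ:ℝ)^2) * h2
      · simp only [AfD, BfD, haf, dt, Fin.sum_univ_three]
        linear_combination ((NΛ:ℝ)^2) * h3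
      · simp only [AfD, BfD, haf, dt, Fin.sum_univ_three]
        linear_combination ((NΛ:ℝ)^2) * h6
      · simp only [AfD, haf]; exact z2 i
      · simp only [BfD]; exact z3 i
    · have haf : afD Λθ kb z = z := by unfold afD; rw [if_neg hzθ]
      refine ⟨?_, ?_, ?_, fun i => ?_, fun i => ?_⟩
      · simp only [AfD, BfD, haf, dt, Fin.sum_univ_three]
        linear_combination ((NΛ:ℝ)^2) * h1
      · simp only [AfD, BfD, haf, dt, Fin.sum_univ_three]
        linear_combination ((NΛ:ℝ)^2) * h3
      · simp only [AfD, BfD, haf, dt, Fin.sum_univ_three]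
        linear_combination ((NΛ:ℝ)^2) * h5
      · simp only [AfD, haf]; exact z1 i
      · simp only [BfD]; exact z3 i
  have hPf : ∀ z, (z ∈ Λv ∨ z ∈ Λθ) → ∀ z', (z' ∈ Λv ∨ z' ∈ Λθ) →
      dt (c3 (AfD Λθ kb NΛ z) (BfD kbb NΛ z)) (PD Λθ kb kbb NΛ z z') = 0 ∧
      dt (c3 (AfD Λθ kb NΛ z') (BfD kbb NΛ z')) (PD Λθ kb kbb NΛ z z') = 0 ∧
      dt (PD Λθ kb kbb NΛ z z') uL ≠ 0 ∧
      (∀ i, ∃ m:ℤ, PD Λθ kb kbb NΛ z z' i = m) := by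
    intro z hz z' hz'
    obtain ⟨hA1, hB1, hAB1, hAZ, hBZ⟩ := hstr z hz
    obtain ⟨hA2, hB2, hAB2, hAZ', hBZ'⟩ := hstr z' hz'
    obtain ⟨p1, p2, p3⟩ := P_props ((NΛ:ℝ)^2) hM _ _ _ _ (PD Λθ kb kbb NΛ z z')
      rfl hA1 hB1 hAB1 hA2 hB2 hAB2
    have hQZ : ∀ i, ∃ m:ℤ, PD Λθ kb kbb NΛ z z' i = m := by
      unfold PD
      by_cases hcc : c3 (c3 (AfD Λθ kb NΛ z) (BfD kbb NΛ z))
          (c3 (AfD Λθ kb NΛ z') (BfD kbb NΛ z')) = 0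
      · rw [if_pos hcc]; exact hAZ
      · rw [if_neg hcc]
        exact zint_c3 _ _ (zint_c3 _ _ hAZ hBZ) (zint_c3 _ _ hAZ' hBZ')
    exact ⟨p1, p2, dt_uL_ne_zero _ hQZ p3, hQZ⟩
  set F : Finset V3 := hΛvfin.toFinset ∪
    ({Pi.single 0 1, Pi.single 1 1, Pi.single 2 1} : Finset V3) with hFdef
  have hF : ∀ z, z ∈ F ↔ (z ∈ Λv ∨ z ∈ Λθ) := by
    intro z
    rw [hFdef]
    simp only [Finset.mem_union, Set.Finite.mem_toFinset, Finset.mem_insert,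
      Finset.mem_singleton]
    rw [hΛθ z]
  obtain ⟨lam0, hlam01, hmaster⟩ := master ((NΛ:ℝ)^2) hM F
    (AfD Λθ kb NΛ) (BfD kbb NΛ) (PD Λθ kb kbb NΛ)
    (fun k hk k' hk' => (hPf k ((hF k).mp hk) k' ((hF k').mp hk')).2.2.1)
  refine ⟨lam0, fun lam hlam hlam1 φ hφ hper hsupp => ?_⟩
  obtain ⟨c, hc⟩ := hsupp
  obtain ⟨t, ht⟩ := hmaster lam hlam c
  refine ⟨fun k => fun i => t k * uL i, ?_⟩
  have key : ∀ k, (k ∈ Λv ∨ k ∈ Λθ) → ∀ k', (k' ∈ Λv ∨ k' ∈ Λθ) → k ≠ k' → ∀ x : V3,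
      Wfn φ NΛ (afD Λθ kb k) (kbb k) (fun i => t k * uL i) x
        * Wfn φ NΛ (afD Λθ kb k') (kbb k') (fun i => t k' * uL i) x = 0 := by
    intro k hk k' hk' hne x
    by_contra hW
    obtain ⟨hW1, hW2⟩ := mul_ne_zero_iff.mp hW
    unfold Wfn at hW1 hW2
    obtain ⟨g1, g2⟩ := mul_ne_zero_iff.mp hW1
    obtain ⟨g3, g4⟩ := mul_ne_zero_iff.mp hW2
    obtain ⟨hA1, hB1, hAB1, hAZ, hBZ⟩ := hstr k hk
    obtain ⟨hA2, hB2, hAB2, hAZ', hBZ'⟩ := hstr k' hk'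
    obtain ⟨p1, p2, pu, hQZ⟩ := hPf k hk k' hk'
    have hI1 := hc _ g1
    have hI2 := hc _ g2
    have hI3 := hc _ g3
    have hI4 := hc _ g4
    rw [show (∑ i, (NΛ:ℝ) * afD Λθ kb k i * (x i - t k * uL i))
        = dt (AfD Λθ kb NΛ k) x - t k * dt (AfD Λθ kb NΛ k) uL from by
      simp only [dt, AfD, Fin.sum_univ_three]; ring] at hI1
    rw [show (∑ i, (NΛ:ℝ) * kbb k i * (x i - t k * uL i))
        = dt (BfD kbb NΛ k) x - t k * dt (BfD kbb NΛ k) uL from by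
      simp only [dt, BfD, Fin.sum_univ_three]; ring] at hI2
    rw [show (∑ i, (NΛ:ℝ) * afD Λθ kb k' i * (x i - t k' * uL i))
        = dt (AfD Λθ kb NΛ k') x - t k' * dt (AfD Λθ kb NΛ k') uL from by
      simp only [dt, AfD, Fin.sum_univ_three]; ring] at hI3
    rw [show (∑ i, (NΛ:ℝ) * kbb k' i * (x i - t k' * uL i))
        = dt (BfD kbb NΛ k') x - t k' * dt (BfD kbb NΛ k') uL from by
      simp only [dt, BfD, Fin.sum_univ_three]; ring] at hI4
    obtain ⟨mA, hmA⟩ := zint_dt _ _ hQZ hAZ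
    obtain ⟨mB, hmB⟩ := zint_dt _ _ hQZ hBZ
    obtain ⟨mA', hmA'⟩ := zint_dt _ _ hQZ hAZ'
    obtain ⟨mB', hmB'⟩ := zint_dt _ _ hQZ hBZ'
    obtain ⟨n, hn⟩ := pair_key ((NΛ:ℝ)^2) hM _ _ _ _ _ uL
      hA1 hB1 hAB1 hA2 hB2 hAB2 p1 p2 mA mB mA' mB' hmA hmB hmA' hmB'
      lam⁻¹ c (t k) (t k') x hI1 hI2 hI3 hI4
    exact ht k ((hF k).mpr hk) k' ((hF k').mpr hk') hne n hn
  have hafθ : ∀ z, z ∈ Λθ → afD Λθ kb z = kb z := fun z hz => by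
    unfold afD; rw [if_pos hz]
  have hafv : ∀ z, z ∈ Λv → afD Λθ kb z = z := fun z hz => by
    unfold afD; rw [if_neg (Set.disjoint_left.mp hdisj hz)]
  refine ⟨?_, ?_, ?_⟩
  · intro k hk k' hk' hne x
    have h := key k (Or.inr hk) k' (Or.inr hk') hne x
    rwa [hafθ k hk, hafθ k' hk'] at h
  · intro k hk k' hk' hne x
    have h := key k (Or.inl hk) k' (Or.inl hk') hne x
    rwa [hafv k hk, hafv k' hk'] at h
  · intro k hk k' hk' x
    have hne : k ≠ k' := by
      intro h; exact (Set.disjoint_left.mp hdisj hk) (h ▸ hk')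
    have h := key k (Or.inl hk) k' (Or.inr hk') hne x
    rwa [hafv k hk, hafθ k' hk'] at h
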